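/- Let $m>1$, $d_G>0$, $P_M>0$, $n\ge 2$. Suppose $(\alpha,\beta):[0,\infty)\to\mathbb{R}^2$ solves the ODE system $\dot\alpha = (m-1)d_G\,\alpha\,(P_M-\alpha-\tfrac{2n}{d_G}\beta)$, $\dot\beta = (m-1)d_G\,\beta\,(P_M-\alpha-\tfrac{2n(m-1)+4}{d_G(m-1)}\beta)$ with initial data $\alpha_0,\beta_0>0$ satisfying $P_M-\tfrac{2n}{d_G}\beta_0 > \alpha_0 > P_M-\tfrac{2n(m-1)+4}{d_G(m-1)}\beta_0$. Then for all $t>0$: $\alpha_0<\alpha(t)<P_M$, $0<\beta(t)<\beta_0$, and $P_M-\tfrac{2n}{d_G}\beta(t) > \alpha(t) > P_M-\tfrac{2n(m-1)+4}{d_G(m-1)}\beta(t)$. -/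
import Mathlib
open Set

private lemma gron_pos (q q' : ℝ → ℝ) (C T : ℝ) (hT : 0 < T)
    (hq : ∀ s ∈ Icc (0:ℝ) T, HasDerivAt q (q' s) s)
    (hb : ∀ s ∈ Ioo (0:ℝ) T, 0 ≤ q' s + C * q s)
    (h0 : 0 < q 0) : 0 < q T := by
  have hwd : ∀ s ∈ Icc (0:ℝ) T,
      HasDerivAt (fun s => q s * Real.exp (C * s))
        (q' s * Real.exp (C * s) + q s * (Real.exp (C * s) * (C * 1))) s := by
    intro s hs
    exact (hq s hs).mul (((hasDerivAt_id s).const_mul C).exp)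
  have mono : MonotoneOn (fun s => q s * Real.exp (C * s)) (Icc 0 T) := by
    apply monotoneOn_of_deriv_nonneg (convex_Icc 0 T)
    · exact fun s hs => ((hwd s hs).continuousAt).continuousWithinAt
    · intro s hs
      rw [interior_Icc] at hs
      exact ((hwd s ⟨hs.1.le, hs.2.le⟩).differentiableAt).differentiableWithinAt
    · intro s hs
      rw [interior_Icc] at hs
      rw [(hwd s ⟨hs.1.le, hs.2.le⟩).deriv]
      have h1 := hb s hs
      have h2 := (Real.exp_pos (C * s)).le
      nlinarith [mul_nonneg h2 h1]
  have h01 := mono (left_mem_Icc.2 hT.le) (right_mem_Icc.2 hT.le) hT.le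
  simp only [mul_zero, Real.exp_zero, mul_one] at h01
  nlinarith [Real.exp_pos (C * T), h01, h0]

set_option maxHeartbeats 1000000 in
/-- Invariant region for the Lotka–Volterra ODE system (3.2). -/
theorem stmt_0 (m dG PM : ℝ) (n : ℕ) (hm : 1 < m) (hdG : 0 < dG) (hPM : 0 < PM)
    (hn : 2 ≤ n) (α β : ℝ → ℝ) (α0 β0 : ℝ) (hα0 : 0 < α0) (hβ0 : 0 < β0)
    (hαode : ∀ t, 0 ≤ t →
      HasDerivAt α ((m - 1) * dG * α t * (PM - α t - (2 * n / dG) * β t)) t)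
    (hβode : ∀ t, 0 ≤ t →
      HasDerivAt β ((m - 1) * dG * β t *
        (PM - α t - ((2 * n * (m - 1) + 4) / (dG * (m - 1))) * β t)) t)
    (hinitα : α 0 = α0) (hinitβ : β 0 = β0)
    (hini1 : α0 < PM - (2 * n / dG) * β0)
    (hini2 : PM - ((2 * n * (m - 1) + 4) / (dG * (m - 1))) * β0 < α0) :
    ∀ t, 0 < t →
      α0 < α t ∧ α t < PM ∧ 0 < β t ∧ β t < β0 ∧
      α t < PM - (2 * n / dG) * β t ∧
      PM - ((2 * n * (m - 1) + 4) / (dG * (m - 1))) * β t < α t := by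
  have hn' : (2:ℝ) ≤ (n:ℝ) := by exact_mod_cast hn
  have hm1 : (0:ℝ) < m - 1 := by linarith
  set k : ℝ := (m - 1) * dG with hkdef
  have hk : 0 < k := mul_pos hm1 hdG
  set c1 : ℝ := 2 * (n:ℝ) / dG with hc1def
  set c2 : ℝ := (2 * (n:ℝ) * (m - 1) + 4) / (dG * (m - 1)) with hc2def
  have hc1 : 0 < c1 := div_pos (by linarith) hdG
  have hc2 : 0 < c2 := div_pos (by nlinarith) (mul_pos hdG hm1)
  set U : ℝ → ℝ := fun s => PM - α s - c1 * β s with hUdef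
  set V : ℝ → ℝ := fun s => α s - PM + c2 * β s with hVdef
  set A' : ℝ → ℝ := fun s => k * α s * (PM - α s - c1 * β s) with hA'def
  set B' : ℝ → ℝ := fun s => k * β s * (PM - α s - c2 * β s) with hB'def
  have hαode' : ∀ s, 0 ≤ s → HasDerivAt α (A' s) s := hαode
  have hβode' : ∀ s, 0 ≤ s → HasDerivAt β (B' s) s := hβode
  have hU0 : 0 < U 0 := by simp only [hUdef, hinitα, hinitβ]; linarith
  have hV0 : 0 < V 0 := by simp only [hVdef, hinitα, hinitβ]; linarith
  have hα00 : 0 < α 0 := by rw [hinitα]; exact hα0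
  have hβ00 : 0 < β 0 := by rw [hinitβ]; exact hβ0
  -- derivatives of U and V
  have hUode : ∀ s, 0 ≤ s → HasDerivAt U ((0 - A' s) - c1 * B' s) s := by
    intro s hs
    exact ((hasDerivAt_const s PM).sub (hαode' s hs)).sub ((hβode' s hs).const_mul c1)
  have hVode : ∀ s, 0 ≤ s → HasDerivAt V (A' s + c2 * B' s) s := by
    intro s hs
    exact ((hαode' s hs).sub_const PM).add ((hβode' s hs).const_mul c2)
  set f : ℝ → ℝ := fun s => min (α s) (min (β s) (min (U s) (V s))) with hfdef
  have hfc : ∀ s, 0 ≤ s → ContinuousAt f s := by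
    intro s hs
    have hca : ContinuousAt α s := (hαode' s hs).continuousAt
    have hcb : ContinuousAt β s := (hβode' s hs).continuousAt
    have hcU : ContinuousAt U s := by
      simp only [hUdef]; fun_prop
    have hcV : ContinuousAt V s := by
      simp only [hVdef]; fun_prop
    exact hca.min (hcb.min (hcU.min hcV))
  have hfiff : ∀ s, 0 < f s ↔ 0 < α s ∧ 0 < β s ∧ 0 < U s ∧ 0 < V s := by
    intro s
    simp only [hfdef, lt_min_iff, and_assoc]
  have hf0 : 0 < f 0 := (hfiff 0).2 ⟨hα00, hβ00, hU0, hV0⟩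
  -- key positivity
  have key : ∀ t, 0 ≤ t → 0 < f t := by
    intro t ht
    by_contra hcon
    push_neg at hcon
    set B : Set ℝ := {s | 0 ≤ s ∧ f s ≤ 0} with hBdef
    have hBne : B.Nonempty := ⟨t, ht, hcon⟩
    have hBbd : BddBelow B := ⟨0, fun b hb => hb.1⟩
    set τ := sInf B with hτdef
    have hτ0 : 0 ≤ τ := le_csInf hBne fun b hb => hb.1
    have hτle : f τ ≤ 0 := by
      by_contra h
      push_neg at h
      have hev : ∀ᶠ s in nhds τ, 0 < f s := (hfc τ hτ0).eventually (eventually_gt_nhds h)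
      rw [Metric.eventually_nhds_iff] at hev
      obtain ⟨ε, hε, hball⟩ := hev
      have hlb : ∀ b ∈ B, τ + ε ≤ b := by
        intro b hb
        by_contra hlt
        push_neg at hlt
        have hbτ : τ ≤ b := csInf_le hBbd hb
        have : dist b τ < ε := by
          rw [Real.dist_eq, abs_of_nonneg (by linarith)]; linarith
        exact absurd hb.2 (not_le.2 (hball this))
      have := le_csInf hBne hlb
      linarith
    have hτpos : 0 < τ := by
      rcases eq_or_lt_of_le hτ0 with h | h
      · exact absurd hτle (not_le.2 (h ▸ hf0))
      · exact h
    have hIoo : ∀ s ∈ Ioo (0:ℝ) τ, 0 < α s ∧ 0 < β s ∧ 0 < U s ∧ 0 < V s := by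
      intro s hs
      apply (hfiff s).1
      by_contra h
      push_neg at h
      exact absurd (csInf_le hBbd ⟨hs.1.le, h⟩) (not_le.2 hs.2)
    -- bound C
    set g : ℝ → ℝ := fun s => k * α s + k * c2 * β s + k * V s with hgdef
    have hgc : ContinuousOn g (Icc 0 τ) := by
      intro s hs
      have hca : ContinuousAt α s := (hαode' s hs.1).continuousAt
      have hcb : ContinuousAt β s := (hβode' s hs.1).continuousAt
      have : ContinuousAt g s := by simp only [hgdef, hVdef]; fun_prop
      exact this.continuousWithinAt
    obtain ⟨x0, hx0, hmax⟩ := isCompact_Icc.exists_isMaxOn (nonempty_Icc.2 hτ0) hgc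
    set C := g x0 with hCdef
    have hC0 : 0 ≤ C := by
      have h1 : g 0 ≤ C := hmax (left_mem_Icc.2 hτ0)
      have : 0 < g 0 := by
        simp only [hgdef]
        have := mul_pos hk hV0
        nlinarith [mul_pos hk hα00, mul_pos (mul_pos hk hc2) hβ00]
      linarith
    have hgle : ∀ s ∈ Ioo (0:ℝ) τ, g s ≤ C := fun s hs => hmax ⟨hs.1.le, hs.2.le⟩
    -- gronwall for each quantity
    have hαpos : 0 < α τ := by
      apply gron_pos α A' C τ hτpos (fun s hs => hαode' s hs.1) _ hα00
      intro s hs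
      obtain ⟨ha, hb, hu, hv⟩ := hIoo s hs
      have h1 : 0 < A' s := by
        simp only [hA'def]
        have : 0 < PM - α s - c1 * β s := hu
        positivity
      nlinarith [mul_nonneg hC0 ha.le]
    have hβpos : 0 < β τ := by
      apply gron_pos β B' C τ hτpos (fun s hs => hβode' s hs.1) _ hβ00
      intro s hs
      obtain ⟨ha, hb, hu, hv⟩ := hIoo s hs
      have hgs := hgle s hs
      have hVle : k * V s ≤ C := by
        simp only [hgdef] at hgs
        nlinarith [mul_nonneg hk.le ha.le, mul_nonneg (mul_nonneg hk.le hc2.le) hb.le]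
      have heq : B' s + C * β s = β s * (C - k * V s) := by
        simp only [hB'def, hVdef]; ring
      rw [heq]
      exact mul_nonneg hb.le (by linarith)
    have hUpos : 0 < U τ := by
      apply gron_pos U (fun s => (0 - A' s) - c1 * B' s) C τ hτpos
        (fun s hs => hUode s hs.1) _ hU0
      intro s hs
      obtain ⟨ha, hb, hu, hv⟩ := hIoo s hs
      have hgs := hgle s hs
      have hαle : k * α s ≤ C := by
        simp only [hgdef] at hgs
        nlinarith [mul_nonneg hk.le hv.le, mul_nonneg (mul_nonneg hk.le hc2.le) hb.le]
      have heq : ((0 - A' s) - c1 * B' s) + C * U s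
          = U s * (C - k * α s) + k * c1 * (β s * V s) := by
        simp only [hA'def, hB'def, hUdef, hVdef]; ring
      rw [heq]
      have := mul_nonneg (mul_nonneg hk.le hc1.le) (mul_nonneg hb.le hv.le)
      nlinarith [mul_nonneg hu.le (sub_nonneg.2 hαle)]
    have hVpos : 0 < V τ := by
      apply gron_pos V (fun s => A' s + c2 * B' s) C τ hτpos
        (fun s hs => hVode s hs.1) _ hV0
      intro s hs
      obtain ⟨ha, hb, hu, hv⟩ := hIoo s hs
      have hgs := hgle s hs
      have hβle : k * c2 * β s ≤ C := by
        simp only [hgdef] at hgs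
        nlinarith [mul_nonneg hk.le ha.le, mul_nonneg hk.le hv.le]
      have heq : (A' s + c2 * B' s) + C * V s
          = k * (α s * U s) + V s * (C - k * c2 * β s) := by
        simp only [hA'def, hB'def, hUdef, hVdef]; ring
      rw [heq]
      have h1 := mul_nonneg hk.le (mul_nonneg ha.le hu.le)
      nlinarith [mul_nonneg hv.le (sub_nonneg.2 hβle)]
    exact absurd hτle (not_le.2 ((hfiff τ).2 ⟨hαpos, hβpos, hUpos, hVpos⟩))
  -- now the conclusions
  have keyQ : ∀ t, 0 ≤ t → 0 < α t ∧ 0 < β t ∧ 0 < U t ∧ 0 < V t :=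
    fun t ht => (hfiff t).1 (key t ht)
  intro t ht
  obtain ⟨hat, hbt, hut, hvt⟩ := keyQ t ht.le
  have hcontα : ContinuousOn α (Icc 0 t) :=
    fun s hs => ((hαode' s hs.1).continuousAt).continuousWithinAt
  have hcontβ : ContinuousOn β (Icc 0 t) :=
    fun s hs => ((hβode' s hs.1).continuousAt).continuousWithinAt
  have hmono : StrictMonoOn α (Icc 0 t) := by
    apply strictMonoOn_of_deriv_pos (convex_Icc 0 t) hcontα
    intro s hs
    rw [interior_Icc] at hs
    rw [(hαode' s hs.1.le).deriv]
    obtain ⟨ha, hb, hu, hv⟩ := keyQ s hs.1.le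
    have : 0 < PM - α s - c1 * β s := hu
    simp only [hA'def]
    positivity
  have hanti : StrictAntiOn β (Icc 0 t) := by
    apply strictAntiOn_of_deriv_neg (convex_Icc 0 t) hcontβ
    intro s hs
    rw [interior_Icc] at hs
    rw [(hβode' s hs.1.le).deriv]
    obtain ⟨ha, hb, hu, hv⟩ := keyQ s hs.1.le
    have hveq : PM - α s - c2 * β s = -(V s) := by simp only [hVdef]; ring
    simp only [hB'def, hveq]
    nlinarith [mul_pos (mul_pos hk hb) hv]
  have h1 : α0 < α t := by
    have := hmono (left_mem_Icc.2 ht.le) (right_mem_Icc.2 ht.le) ht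
    rwa [hinitα] at this
  have h4 : β t < β0 := by
    have := hanti (left_mem_Icc.2 ht.le) (right_mem_Icc.2 ht.le) ht
    rwa [hinitβ] at this
  have hut' : α t < PM - c1 * β t := by
    simp only [hUdef] at hut; linarith
  have hvt' : PM - c2 * β t < α t := by
    simp only [hVdef] at hvt; linarith
  have h2 : α t < PM := by nlinarith [mul_pos hc1 hbt]
  exact ⟨h1, h2, hbt, h4, hut', hvt'⟩
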